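/- Let G be a finite group with a normal subgroup N, let K ⊆ E be a field extension of finite degree s, and let A = M_m(E). Suppose G acts on A on the right by K-algebra automorphisms x ↦ x^g; suppose for each g ∈ G there is a field automorphism σ_g of E fixing K pointwise such that (z·x)^g = σ_g(z)·x^g for all z ∈ E and x ∈ A; and suppose X : N → GL_m(E) is a group homomorphism with x^n = X(n)⁻¹ x X(n) for all n ∈ N, x ∈ A, and X(n)^g = X(g⁻¹ n g) for all n ∈ N, g ∈ G. Let ι : A → M_{ms}(K) be a unitary embedding of K-algebras and let Y : G → GL_{ms}(K) be a function satisfying: Y(g)⁻¹ ι(x) Y(g) = ι(x^g) for all x ∈ A, g ∈ G; Y(n) = ι(X(n)) for all n ∈ N; and Y(gn) = Y(g)Y(n), Y(ng) = Y(n)Y(g) for all n ∈ N, g ∈ G. Then: (a) there is a unique function α : G × G → E^× such that Y(g)Y(h) = Y(gh)·ι(α(g,h)·I_m) for all g,h ∈ G; (b) α satisfies the 2-cocycle identity α(gh,k)·σ_k(α(g,h)) = α(g,hk)·α(h,k) for all g,h,k ∈ G; and (c) α(gn, hn') = α(g,h) for all g,h ∈ G and n, n' ∈ N, so that α is constant on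 N×N-cosets and descends to a factor set of G/N with values in E^×. -/

import Mathlib

open Matrix in
private lemma key_centralizer {K E : Type} [Field K] [Field E] [Algebra K E]
    [FiniteDimensional K E]
    {s m : ℕ} (hs : Module.finrank K E = s) (hm : 0 < m)
    (ι : Matrix (Fin m) (Fin m) E →ₐ[K] Matrix (Fin (m * s)) (Fin (m * s)) K)
    (hι : Function.Injective ⇑ι)
    (Z : Matrix (Fin (m * s)) (Fin (m * s)) K)
    (hZ : ∀ x, Z * ι x = ι x * Z) :
    ∃ z : E, Z = ι (z • (1 : Matrix (Fin m) (Fin m) E)) := by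
  classical
  set A := Matrix (Fin m) (Fin m) E with hA
  set V := (Fin (m * s) → K) with hV
  have hs0 : 0 < s := hs ▸ Module.finrank_pos
  let T : Matrix (Fin (m*s)) (Fin (m*s)) K ≃ₐ[K] Module.End K V :=
    Matrix.toLinAlgEquiv'
  let e : A →ₐ[K] Module.End K V := (T : _ ≃ₐ[K] Module.End K V).toAlgHom.comp ι
  let χ : E →ₐ[K] A := IsScalarTower.toAlgHom K E A
  let φ : E →ₐ[K] Module.End K V := e.comp χ
  letI : Module E V := Module.compHom V φ.toRingHom
  have hsm : ∀ (z : E) (v : V), z • v = φ z v := fun _ _ => rfl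
  letI : IsScalarTower K E V := by
    constructor
    intro k z v
    rw [hsm, hsm]
    have h1 : φ (k • z) = k • φ z := map_smul φ.toLinearMap k z
    rw [h1, LinearMap.smul_apply]
  letI : SMulCommClass E K V := by
    constructor
    intro z k v
    rw [hsm, hsm]
    exact map_smul (φ z) k v
  haveI : FiniteDimensional E V := Module.Finite.right K E V
  have hVK : Module.finrank K V = m * s := by
    show Module.finrank K (Fin (m * s) → K) = m * s
    rw [Module.finrank_pi, Fintype.card_fin]
  have hVE : Module.finrank E V = m := by
    have h := Module.finrank_mul_finrank K E V
    rw [hs, hVK] at h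
    exact Nat.eq_of_mul_eq_mul_left hs0 (h.trans (mul_comm m s))
  -- commutation
  have hEcomm : ∀ (x : A) (z : E), e x * φ z = φ z * e x := by
    intro x z
    show e x * e (χ z) = e (χ z) * e x
    rw [← _root_.map_mul, ← _root_.map_mul]
    congr 1
    show x * algebraMap E A z = algebraMap E A z * x
    exact (Algebra.commutes z x).symm
  -- ψ
  let lift : A → (V →ₗ[E] V) := fun x =>
    { toFun := e x
      map_add' := (e x).map_add
      map_smul' := by
        intro z v
        simp only [RingHom.id_apply]
        rw [hsm, hsm, ← Module.End.mul_apply, ← Module.End.mul_apply, hEcomm] }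
  let ψ : A →ₗ[E] (V →ₗ[E] V) :=
    { toFun := lift
      map_add' := by
        intro x y
        refine LinearMap.ext fun v => ?_
        show e (x + y) v = e x v + e y v
        rw [map_add]; rfl
      map_smul' := by
        intro z x
        refine LinearMap.ext fun v => ?_
        show e (z • x) v = (z • (lift x : V →ₗ[E] V)) v
        rw [Algebra.smul_def, _root_.map_mul, LinearMap.smul_apply, hsm,
          Module.End.mul_apply]
        rfl }
  have hψinj : Function.Injective ψ := by
    intro x y hxy
    apply hι
    apply T.injective
    exact LinearMap.ext fun v => LinearMap.congr_fun hxy v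
  have hA2 : Module.finrank E (Matrix (Fin m) (Fin m) E) = m * m := by
    rw [Module.finrank_matrix, Module.finrank_self, Fintype.card_fin, mul_one]
  have hfr : Module.finrank E A = Module.finrank E (V →ₗ[E] V) := by
    rw [Module.finrank_linearMap, hVE]
    exact hA2
  have hψsurj : Function.Surjective ψ :=
    (LinearMap.injective_iff_surjective_of_finrank_eq_finrank hfr).mp hψinj
  -- Z as E-linear map
  let Z' : V →ₗ[E] V :=
    { toFun := T Z
      map_add' := (T Z).map_add
      map_smul' := by
        intro z v
        simp only [RingHom.id_apply]
        rw [hsm]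
        show (T Z) ((e (χ z)) v) = (e (χ z)) ((T Z) v)
        rw [← Module.End.mul_apply, ← Module.End.mul_apply]
        show (T Z * T (ι (χ z))) v = (T (ι (χ z)) * T Z) v
        rw [← _root_.map_mul, ← _root_.map_mul, hZ] }
  obtain ⟨x, hx⟩ := hψsurj Z'
  have hιx : ι x = Z := by
    apply T.injective
    exact LinearMap.ext fun v => LinearMap.congr_fun hx v
  have hxc : ∀ y : A, x * y = y * x := by
    intro y
    apply hι
    rw [_root_.map_mul, _root_.map_mul, hιx]
    exact hZ y
  obtain ⟨r, hr⟩ := Matrix.mem_range_scalar_of_commute_single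
    (M := x) (fun i j _ => (hxc _).symm)
  refine ⟨r, ?_⟩
  rw [← hιx]
  congr 1
  rw [Matrix.smul_one_eq_diagonal, ← Matrix.scalar_apply, hr]


/-- In the setting of Statement 3, with semilinearity data `σ_g` satisfying
`(z•x)^g = σ_g(z)•x^g`, and `Y : G → GL_{ms}(K)` satisfying conditions (1)–(3): (a) there is a
unique `α : G × G → Eˣ` with `Y(g)Y(h) = Y(gh)·ι(α(g,h)•1)`; (b) `α` satisfies the 2-cocycle
identity `α(gh,k)·σ_k(α(g,h)) = α(g,hk)·α(h,k)`; (c) `α` is constant on `N×N`-cosets. -/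
theorem stmt_4 (G : Type) [Group G] [Fintype G] (N : Subgroup G) (hN : N.Normal)
    (K E : Type) [Field K] [Field E] [Algebra K E] [FiniteDimensional K E]
    (s : ℕ) (hs : Module.finrank K E = s) (m : ℕ) (hm : 0 < m)
    (act : G → (Matrix (Fin m) (Fin m) E ≃ₐ[K] Matrix (Fin m) (Fin m) E))
    (hact1 : ∀ x : Matrix (Fin m) (Fin m) E, act 1 x = x)
    (hactmul : ∀ (g h : G) (x : Matrix (Fin m) (Fin m) E), act h (act g x) = act (g * h) x)
    (σ : G → (E ≃ₐ[K] E))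
    (hσ : ∀ (g : G) (z : E) (x : Matrix (Fin m) (Fin m) E),
      act g (z • x) = σ g z • act g x)
    (X : N →* (Matrix (Fin m) (Fin m) E)ˣ)
    (hXconj : ∀ (n : N) (x : Matrix (Fin m) (Fin m) E),
      act ↑n x = (↑((X n)⁻¹) : Matrix (Fin m) (Fin m) E) * x * (↑(X n) : Matrix (Fin m) (Fin m) E))
    (hXact : ∀ (n : N) (g : G),
      act g (↑(X n) : Matrix (Fin m) (Fin m) E)
        = (↑(X ⟨g⁻¹ * ↑n * g, hN.conj_mem' ↑n n.2 g⟩) : Matrix (Fin m) (Fin m) E))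
    (ι : Matrix (Fin m) (Fin m) E →ₐ[K] Matrix (Fin (m * s)) (Fin (m * s)) K)
    (hι : Function.Injective ⇑ι)
    (Y : G → (Matrix (Fin (m * s)) (Fin (m * s)) K)ˣ)
    (hY1 : ∀ (x : Matrix (Fin m) (Fin m) E) (g : G),
      (↑((Y g)⁻¹) : Matrix (Fin (m * s)) (Fin (m * s)) K) * ι x
          * (↑(Y g) : Matrix (Fin (m * s)) (Fin (m * s)) K)
        = ι (act g x))
    (hY2 : ∀ n : N, (↑(Y ↑n) : Matrix (Fin (m * s)) (Fin (m * s)) K)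
        = ι (↑(X n) : Matrix (Fin m) (Fin m) E))
    (hY3 : ∀ (g : G) (n : N), Y (g * ↑n) = Y g * Y ↑n ∧ Y (↑n * g) = Y ↑n * Y g) :
    (∃! α : G → G → Eˣ, ∀ g h : G,
        (↑(Y g) : Matrix (Fin (m * s)) (Fin (m * s)) K)
            * (↑(Y h) : Matrix (Fin (m * s)) (Fin (m * s)) K)
          = (↑(Y (g * h)) : Matrix (Fin (m * s)) (Fin (m * s)) K)
            * ι ((↑(α g h) : E) • (1 : Matrix (Fin m) (Fin m) E))) ∧
    (∀ α : G → G → Eˣ,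
      (∀ g h : G,
        (↑(Y g) : Matrix (Fin (m * s)) (Fin (m * s)) K)
            * (↑(Y h) : Matrix (Fin (m * s)) (Fin (m * s)) K)
          = (↑(Y (g * h)) : Matrix (Fin (m * s)) (Fin (m * s)) K)
            * ι ((↑(α g h) : E) • (1 : Matrix (Fin m) (Fin m) E))) →
      (∀ g h k : G,
        (↑(α (g * h) k) : E) * σ k (↑(α g h) : E)
          = (↑(α g (h * k)) : E) * (↑(α h k) : E)) ∧
      (∀ (g h : G) (n n' : N), α (g * ↑n) (h * ↑n') = α g h)) := by
  classical
  have hs0 : 0 < s := hs ▸ Module.finrank_pos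
  have i0 : Fin m := ⟨0, hm⟩
  -- scalar extraction
  have hscal : ∀ z w : E, z • (1 : Matrix (Fin m) (Fin m) E)
      = w • (1 : Matrix (Fin m) (Fin m) E) → z = w := by
    intro z w h
    have h2 : (z • (1 : Matrix (Fin m) (Fin m) E)) i0 i0
        = (w • (1 : Matrix (Fin m) (Fin m) E)) i0 i0 := by rw [h]
    simpa [Matrix.smul_apply, Matrix.one_apply_eq] using h2
  -- the scalar embedding
  set ρ : E →+* Matrix (Fin (m * s)) (Fin (m * s)) K :=
    ι.toRingHom.comp (algebraMap E (Matrix (Fin m) (Fin m) E)) with hρdef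
  have hρ : ∀ z : E, ι (z • (1 : Matrix (Fin m) (Fin m) E)) = ρ z := by
    intro z
    rw [← Algebra.algebraMap_eq_smul_one]
    rfl
  have hρinj : ∀ z w : E, ρ z = ρ w → z = w := fun z w h =>
    hscal z w (hι (by rw [hρ, hρ, h]))
  -- moving ι-elements past the Y's
  have hmove : ∀ (u : G) (w : Matrix (Fin m) (Fin m) E),
      ι w * ((Y u).val : Matrix (Fin (m * s)) (Fin (m * s)) K) = (Y u).val * ι (act u w) := by
    intro u w
    rw [← hY1 w u, ← mul_assoc, Units.mul_inv_cancel_left]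
  have hmove' : ∀ (u : G) (w : Matrix (Fin m) (Fin m) E),
      (((Y u)⁻¹).val : Matrix (Fin (m * s)) (Fin (m * s)) K) * ι w
        = ι (act u w) * ((Y u)⁻¹).val := by
    intro u w
    rw [← hY1 w u, Units.mul_inv_cancel_right]
  have hmoveρ : ∀ (u : G) (z : E),
      ρ z * ((Y u).val : Matrix (Fin (m * s)) (Fin (m * s)) K) = (Y u).val * ρ (σ u z) := by
    intro u z
    have h := hmove u (z • 1)
    rw [hσ u z 1, map_one, hρ, hρ] at h
    exact h
  -- existence of the factor set values
  have hex : ∀ g h : G, ∃ z : Eˣ,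
      ((Y g).val : Matrix (Fin (m * s)) (Fin (m * s)) K) * (Y h).val
        = (Y (g * h)).val * ι ((↑z : E) • (1 : Matrix (Fin m) (Fin m) E)) := by
    intro g h
    have hZcomm : ∀ x, ((((Y (g * h))⁻¹).val : Matrix (Fin (m * s)) (Fin (m * s)) K)
          * (Y g).val * (Y h).val) * ι x
        = ι x * (((Y (g * h))⁻¹).val * (Y g).val * (Y h).val) := by
      intro x
      have s1 : ((Y h).val : Matrix (Fin (m * s)) (Fin (m * s)) K) * ι x
          = ι (act h⁻¹ x) * (Y h).val := by
        have hh := hmove h (act h⁻¹ x)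
        rw [hactmul h⁻¹ h x, inv_mul_cancel, hact1] at hh
        exact hh.symm
      have s2 : ((Y g).val : Matrix (Fin (m * s)) (Fin (m * s)) K) * ι (act h⁻¹ x)
          = ι (act g⁻¹ (act h⁻¹ x)) * (Y g).val := by
        have hh := hmove g (act g⁻¹ (act h⁻¹ x))
        rw [hactmul g⁻¹ g (act h⁻¹ x), inv_mul_cancel, hact1] at hh
        exact hh.symm
      have s3 : (((Y (g * h))⁻¹).val : Matrix (Fin (m * s)) (Fin (m * s)) K)
          * ι (act g⁻¹ (act h⁻¹ x)) = ι x * ((Y (g * h))⁻¹).val := by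
        have h4 := hmove' (g * h) (act g⁻¹ (act h⁻¹ x))
        have h5 : act (g * h) (act g⁻¹ (act h⁻¹ x)) = x := by
          rw [hactmul h⁻¹ g⁻¹ x, hactmul (h⁻¹ * g⁻¹) (g * h) x,
            show (h⁻¹ * g⁻¹) * (g * h) = 1 by group, hact1]
        rw [h5] at h4
        exact h4
      calc (((Y (g * h))⁻¹).val : Matrix (Fin (m * s)) (Fin (m * s)) K)
            * (Y g).val * (Y h).val * ι x
          = ((Y (g * h))⁻¹).val * ((Y g).val * ((Y h).val * ι x)) := by simp only [mul_assoc]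
        _ = ((Y (g * h))⁻¹).val * ((Y g).val * (ι (act h⁻¹ x) * (Y h).val)) := by rw [s1]
        _ = ((Y (g * h))⁻¹).val * (((Y g).val * ι (act h⁻¹ x)) * (Y h).val) := by
            simp only [mul_assoc]
        _ = ((Y (g * h))⁻¹).val * ((ι (act g⁻¹ (act h⁻¹ x)) * (Y g).val) * (Y h).val) := by
            rw [s2]
        _ = (((Y (g * h))⁻¹).val * ι (act g⁻¹ (act h⁻¹ x))) * ((Y g).val * (Y h).val) := by
            simp only [mul_assoc]
        _ = (ι x * ((Y (g * h))⁻¹).val) * ((Y g).val * (Y h).val) := by rw [s3]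
        _ = ι x * (((Y (g * h))⁻¹).val * (Y g).val * (Y h).val) := by simp only [mul_assoc]
    obtain ⟨z, hz⟩ := key_centralizer hs hm ι hι _ hZcomm
    haveI : Nonempty (Fin (m * s)) := ⟨⟨0, Nat.mul_pos hm hs0⟩⟩
    have hunit : IsUnit ((((Y (g * h))⁻¹).val : Matrix (Fin (m * s)) (Fin (m * s)) K)
        * (Y g).val * (Y h).val) :=
      ⟨(Y (g * h))⁻¹ * Y g * Y h, by simp [Units.val_mul]⟩
    have hz0 : z ≠ 0 := by
      intro h0
      rw [h0, zero_smul, map_zero] at hz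
      rw [hz] at hunit
      exact hunit.ne_zero rfl
    refine ⟨Units.mk0 z hz0, ?_⟩
    simp only [Units.val_mk0]
    rw [← hz, ← mul_assoc, Units.mul_inv_cancel_left]
  refine ⟨⟨fun g h => Classical.choose (hex g h),
      fun g h => Classical.choose_spec (hex g h), ?_⟩, ?_⟩
  · intro β hβ
    funext g h
    exact Units.ext (hscal _ _ (hι ((Units.mul_right_inj (Y (g * h))).mp
      ((hβ g h).symm.trans (Classical.choose_spec (hex g h))))))
  · intro α hα
    have hα' : ∀ g h : G, ((Y g).val : Matrix (Fin (m * s)) (Fin (m * s)) K) * (Y h).val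
        = (Y (g * h)).val * ρ (α g h) := fun g h => by rw [hα g h, hρ]
    constructor
    · intro g h k
      have e1 : ((Y g).val : Matrix (Fin (m * s)) (Fin (m * s)) K) * (Y h).val * (Y k).val
          = (Y (g * h * k)).val * ρ (↑(α (g * h) k) * σ k ↑(α g h)) := by
        rw [hα' g h, mul_assoc, hmoveρ k, ← mul_assoc, hα' (g * h) k, mul_assoc,
          ← _root_.map_mul]
      have e2 : ((Y g).val : Matrix (Fin (m * s)) (Fin (m * s)) K) * ((Y h).val * (Y k).val)
          = (Y (g * h * k)).val * ρ (↑(α g (h * k)) * ↑(α h k)) := by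
        rw [hα' h k, ← mul_assoc, hα' g (h * k), mul_assoc, ← _root_.map_mul,
          ← mul_assoc g h k]
      have e3 := e1.symm.trans ((mul_assoc _ _ _).trans e2)
      exact hρinj _ _ ((Units.mul_right_inj (Y (g * h * k))).mp e3)
    · intro g h n n'
      have f2 : ∀ (z : E) (n₀ : N),
          ρ z * ((Y ↑n₀).val : Matrix (Fin (m * s)) (Fin (m * s)) K) = (Y ↑n₀).val * ρ z := by
        intro z n₀
        rw [hY2 n₀, ← hρ, ← _root_.map_mul, ← _root_.map_mul]
        congr 1
        rw [← Algebra.algebraMap_eq_smul_one]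
        exact (Algebra.commutes z _)
      let n₂ : N := ⟨h⁻¹ * ↑n * h, hN.conj_mem' ↑n n.2 h⟩
      have f1 : ((Y ↑n).val : Matrix (Fin (m * s)) (Fin (m * s)) K) * (Y h).val
          = (Y h).val * (Y ↑n₂).val := by
        rw [hY2 n, hY2 n₂, hmove h, hXact n h]
      have f3 : ((Y ↑n₂).val : Matrix (Fin (m * s)) (Fin (m * s)) K) * (Y ↑n').val
          = (Y ↑(n₂ * n')).val := by
        rw [hY2 n₂, hY2 n', hY2 (n₂ * n'), ← _root_.map_mul, ← Units.val_mul,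
          ← _root_.map_mul]
      have f4 : (g * h) * ↑(n₂ * n') = (g * ↑n) * (h * ↑n') := by
        show (g * h) * ((h⁻¹ * ↑n * h) * ↑n') = (g * ↑n) * (h * ↑n')
        group
      have keyc : ((Y (g * ↑n)).val : Matrix (Fin (m * s)) (Fin (m * s)) K) * (Y (h * ↑n')).val
          = (Y ((g * ↑n) * (h * ↑n'))).val * ρ ↑(α g h) := by
        calc ((Y (g * ↑n)).val : Matrix (Fin (m * s)) (Fin (m * s)) K) * (Y (h * ↑n')).val
            = (Y g).val * (Y ↑n).val * ((Y h).val * (Y ↑n').val) := by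
              rw [(hY3 g n).1, (hY3 h n').1, Units.val_mul, Units.val_mul]
          _ = (Y g).val * ((Y ↑n).val * (Y h).val) * (Y ↑n').val := by simp only [mul_assoc]
          _ = (Y g).val * ((Y h).val * (Y ↑n₂).val) * (Y ↑n').val := by rw [f1]
          _ = (Y g).val * (Y h).val * ((Y ↑n₂).val * (Y ↑n').val) := by simp only [mul_assoc]
          _ = (Y (g * h)).val * ρ ↑(α g h) * ((Y ↑n₂).val * (Y ↑n').val) := by rw [hα']
          _ = (Y (g * h)).val * ((ρ ↑(α g h) * (Y ↑n₂).val) * (Y ↑n').val) := by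
              simp only [mul_assoc]
          _ = (Y (g * h)).val * (((Y ↑n₂).val * ρ ↑(α g h)) * (Y ↑n').val) := by rw [f2 _ n₂]
          _ = (Y (g * h)).val * ((Y ↑n₂).val * (ρ ↑(α g h) * (Y ↑n').val)) := by
              simp only [mul_assoc]
          _ = (Y (g * h)).val * ((Y ↑n₂).val * ((Y ↑n').val * ρ ↑(α g h))) := by rw [f2 _ n']
          _ = (Y (g * h)).val * ((Y ↑n₂).val * (Y ↑n').val) * ρ ↑(α g h) := by
              simp only [mul_assoc]
          _ = (Y (g * h)).val * (Y ↑(n₂ * n')).val * ρ ↑(α g h) := by rw [f3]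
          _ = (Y ((g * h) * ↑(n₂ * n'))).val * ρ ↑(α g h) := by
              rw [(hY3 (g * h) (n₂ * n')).1, Units.val_mul]
          _ = (Y ((g * ↑n) * (h * ↑n'))).val * ρ ↑(α g h) := by rw [f4]
      have e5 := keyc.symm.trans (hα' (g * ↑n) (h * ↑n'))
      exact Units.ext (hρinj _ _ ((Units.mul_right_inj _).mp e5)).symm
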